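/- Bernstein ψ₁ inequality for Banach space valued variables: if U, U_1,...,U_n are i.i.d. mean-zero random variables in a Banach space with ‖U‖_{ψ₁} < ∞, then for all t > 0, P( | ‖∑_{i=1}^n U_i‖ − E‖∑_{i=1}^n U_i‖ | ≥ t ) ≤ 2 exp( −c min( t²/(n‖U‖²_{ψ₁}), t/‖U‖_{ψ₁} ) ) for a universal constant c > 0. -/

import Mathlib

open MeasureTheory
open scoped BigOperators

set_option linter.unusedSectionVars false
set_option maxHeartbeats 1000000

lemma exp_le_quad (z : ℝ) : Real.exp z ≤ 1 + z + z^2 * Real.exp |z| := by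
  rcases le_or_gt (|z|) 1 with h | h
  · have := Real.abs_exp_sub_one_sub_id_le h
    have h1 : Real.exp z - 1 - z ≤ z ^ 2 := (abs_le.1 this).2
    nlinarith [Real.exp_nonneg z, Real.one_le_exp (abs_nonneg z), sq_nonneg z]
  · rcases le_or_gt 0 z with hz | hz
    · have hz1 : 1 < z := by rwa [abs_of_nonneg hz] at h
      have : |z| = z := abs_of_nonneg hz
      rw [this]
      have h2 : Real.exp z ≤ z^2 * Real.exp z :=
        le_mul_of_one_le_left (Real.exp_nonneg z) (by nlinarith)
      linarith
    · have hz1 : z < -1 := by rw [abs_of_neg hz] at h; linarith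
      have h0 : Real.exp z ≤ 1 := Real.exp_le_one_iff.2 hz.le
      nlinarith [Real.exp_nonneg |z|, Real.one_le_exp (abs_nonneg z)]

lemma sq_le_exp_half (s : ℝ) (hs : 0 ≤ s) : s^2 ≤ 16 * Real.exp (s/2) := by
  have h4 : s/4 ≤ Real.exp (s/4) := (Real.add_one_le_exp _).trans' (by linarith)
  have h1 : (s/4)^2 ≤ Real.exp (s/4) ^ 2 := by
    apply sq_le_sq' _ h4; nlinarith [Real.exp_pos (s/4)]
  have h2 : Real.exp (s/4) ^ 2 = Real.exp (s/2) := by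
    rw [sq, ← Real.exp_add]; ring_nf
  nlinarith

lemma mgf_step {Ω' : Type*} [MeasurableSpace Ω'] (μ : Measure Ω') [IsProbabilityMeasure μ]
    (Z : Ω' → ℝ) (hm : AEStronglyMeasurable Z μ) (hint : Integrable Z μ)
    (hz : ∫ ω, Z ω ∂μ = 0)
    (hV : Integrable (fun ω => Z ω ^ 2 * Real.exp |Z ω|) μ) :
    ∫ ω, Real.exp (Z ω) ∂μ ≤ Real.exp (∫ ω, Z ω ^ 2 * Real.exp |Z ω| ∂μ) := by
  have hIexp : Integrable (fun ω => Real.exp (Z ω)) μ := by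
    apply Integrable.mono' ((integrable_const 1).add (hint.abs.add hV))
    · exact (Real.continuous_exp.comp_aestronglyMeasurable hm)
    · filter_upwards with ω
      rw [Real.norm_eq_abs, abs_of_pos (Real.exp_pos _)]
      have := exp_le_quad (Z ω)
      have h1 : Z ω ≤ |Z ω| := le_abs_self _
      simp only [Pi.add_apply]
      linarith
  calc ∫ ω, Real.exp (Z ω) ∂μ
      ≤ ∫ ω, (1 + Z ω + Z ω ^ 2 * Real.exp |Z ω|) ∂μ := by
        apply integral_mono hIexp ((integrable_const 1).add hint |>.add hV)
        intro ω; exact exp_le_quad (Z ω)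
    _ = 1 + ∫ ω, Z ω ^ 2 * Real.exp |Z ω| ∂μ := by
        have hA : Integrable (fun ω => 1 + Z ω) μ := (integrable_const 1).add hint
        rw [integral_add hA hV, integral_add (integrable_const 1) hint, hz, integral_const]
        simp
    _ ≤ Real.exp (∫ ω, Z ω ^ 2 * Real.exp |Z ω| ∂μ) := by
        have := Real.add_one_le_exp (∫ ω, Z ω ^ 2 * Real.exp |Z ω| ∂μ)
        linarith

lemma key_real {ρ m a : ℝ} (hρ : 0 < ρ) (hm : 0 ≤ m) (hmρ : m ≤ ρ) (ha : 0 ≤ a) :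
    (a + m)^2 * Real.exp ((a + m)/(2*ρ)) ≤ 48 * ρ^2 * Real.exp (a/ρ) := by
  have hs : 0 ≤ (a + m)/ρ := div_nonneg (by linarith) hρ.le
  have h1 : ((a + m)/ρ)^2 ≤ 16 * Real.exp ((a + m)/ρ/2) := sq_le_exp_half _ hs
  have heq : (a + m)^2 = ρ^2 * ((a + m)/ρ)^2 := by field_simp
  have h2 : (a + m)^2 * Real.exp ((a + m)/(2*ρ))
      ≤ 16 * ρ^2 * (Real.exp ((a + m)/(2*ρ)) * Real.exp ((a + m)/(2*ρ))) := by
    rw [heq]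
    have : (a + m)/ρ/2 = (a + m)/(2*ρ) := by ring
    rw [this] at h1
    have hh := mul_le_mul_of_nonneg_left
      (mul_le_mul_of_nonneg_right h1 (Real.exp_pos ((a + m)/(2*ρ))).le) (sq_nonneg ρ)
    nlinarith [hh]
  have h3 : Real.exp ((a + m)/(2*ρ)) * Real.exp ((a + m)/(2*ρ)) = Real.exp (m/ρ) * Real.exp (a/ρ) := by
    rw [← Real.exp_add, ← Real.exp_add]; congr 1; field_simp; ring
  have h4 : Real.exp (m/ρ) ≤ 3 := by
    have : m/ρ ≤ 1 := (div_le_one hρ).2 hmρ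
    calc Real.exp (m/ρ) ≤ Real.exp 1 := Real.exp_le_exp.2 this
    _ ≤ 3 := by linarith [Real.exp_one_lt_d9]
  calc (a + m)^2 * Real.exp ((a + m)/(2*ρ))
      ≤ 16 * ρ^2 * (Real.exp (m/ρ) * Real.exp (a/ρ)) := by rw [← h3]; exact h2
    _ ≤ 48 * ρ^2 * Real.exp (a/ρ) := by
        have hh := mul_le_mul_of_nonneg_left
          (mul_le_mul_of_nonneg_right h4 (Real.exp_pos (a/ρ)).le)
          (by positivity : (0:ℝ) ≤ 16 * ρ^2)
        nlinarith [hh]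

section Banach

variable {B : Type*} [NormedAddCommGroup B] [MeasurableSpace B] [BorelSpace B]
  [SecondCountableTopology B]
  {μ : Measure B} [IsProbabilityMeasure μ] {ρ : ℝ}

lemma self_le_exp (s : ℝ) : s ≤ Real.exp s := by linarith [Real.add_one_le_exp s]

lemma norm_integrable (hρ : 0 < ρ)
    (hInt : Integrable (fun x => Real.exp (‖x‖/ρ)) μ) :
    Integrable (fun x : B => ‖x‖) μ := by
  apply Integrable.mono' (hInt.const_mul ρ) measurable_norm.aestronglyMeasurable
  filter_upwards with x
  rw [Real.norm_eq_abs, abs_of_nonneg (norm_nonneg x)]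
  have := self_le_exp (‖x‖/ρ)
  calc ‖x‖ = ρ * (‖x‖/ρ) := by field_simp
    _ ≤ ρ * Real.exp (‖x‖/ρ) := by nlinarith

lemma mean_norm_le (hρ : 0 < ρ)
    (hInt : Integrable (fun x => Real.exp (‖x‖/ρ)) μ)
    (h2 : ∫ x, Real.exp (‖x‖/ρ) ∂μ ≤ 2) :
    ∫ x, ‖x‖ ∂μ ≤ ρ := by
  have hni := norm_integrable hρ hInt
  have h1 : ∫ x, (‖x‖/ρ) ∂μ ≤ ∫ x, (Real.exp (‖x‖/ρ) - 1) ∂μ := by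
    apply integral_mono (hni.div_const ρ) (hInt.sub (integrable_const 1))
    intro x
    have := Real.add_one_le_exp (‖x‖/ρ)
    simp only [Pi.sub_apply]; linarith
  rw [integral_sub hInt (integrable_const 1), integral_const] at h1
  rw [integral_div] at h1
  simp only [smul_eq_mul, measure_univ, probReal_univ, ENNReal.toReal_one, one_mul] at h1
  have : ∫ x, ‖x‖ ∂μ ≤ ρ * 1 := by
    rw [div_le_iff₀ hρ] at h1
    nlinarith
  linarith

lemma lip_continuous {F : B → ℝ} (hF : ∀ u v, |F u - F v| ≤ ‖u - v‖) : Continuous F := by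
  refine LipschitzWith.continuous (K := 1) (LipschitzWith.of_dist_le_mul fun u v => ?_)
  rw [Real.dist_eq, dist_eq_norm]
  simpa using hF u v

lemma lip_integrable (hρ : 0 < ρ) (hInt : Integrable (fun x => Real.exp (‖x‖/ρ)) μ)
    {F : B → ℝ} (hF : ∀ u v, |F u - F v| ≤ ‖u - v‖) : Integrable F μ := by
  apply Integrable.mono' ((integrable_const |F 0|).add (norm_integrable hρ hInt))
    (lip_continuous hF).aestronglyMeasurable
  filter_upwards with x
  have h := hF x 0
  rw [sub_zero] at h
  rw [Real.norm_eq_abs]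
  have : |F x| - |F 0| ≤ |F x - F 0| := by
    have := abs_sub_abs_le_abs_sub (F x) (F 0); linarith
  simp only [Pi.add_apply]
  linarith

/-- Single-variable MGF bound for a 1-Lipschitz function of a ψ₁ variable. -/
lemma lip_mgf (hρ : 0 < ρ) (hInt : Integrable (fun x => Real.exp (‖x‖/ρ)) μ)
    (h2 : ∫ x, Real.exp (‖x‖/ρ) ∂μ ≤ 2) {lam : ℝ} (hlam : |lam| ≤ 1/(2*ρ))
    {F : B → ℝ} (hF : ∀ u v, |F u - F v| ≤ ‖u - v‖) :
    ∫ y, Real.exp (lam * (F y - ∫ v, F v ∂μ)) ∂μ ≤ Real.exp (96 * lam^2 * ρ^2) := by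
  set m : ℝ := ∫ x, ‖x‖ ∂μ with hm
  have hni := norm_integrable hρ hInt
  have hm0 : 0 ≤ m := integral_nonneg fun x => norm_nonneg x
  have hmρ : m ≤ ρ := mean_norm_le hρ hInt h2
  have hFi := lip_integrable hρ hInt hF
  set c : ℝ := ∫ v, F v ∂μ with hc
  set Z : B → ℝ := fun y => lam * (F y - c) with hZ
  have hFc : Continuous F := lip_continuous hF
  have hZm : Continuous Z := continuous_const.mul (hFc.sub continuous_const)
  have hZint : Integrable Z μ := ((hFi.sub (integrable_const c)).const_mul lam)
  have hZ0 : ∫ y, Z y ∂μ = 0 := by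
    rw [hZ]
    simp only
    rw [integral_const_mul, integral_sub hFi (integrable_const c), integral_const]
    simp [hc]
  have hZbd : ∀ y, |Z y| ≤ |lam| * (‖y‖ + m) := by
    intro y
    have h1 : F y - c = ∫ v, (F y - F v) ∂μ := by
      rw [integral_sub (integrable_const (F y)) hFi, integral_const]
      simp [hc]
    have h2' : |F y - c| ≤ ‖y‖ + m := by
      rw [h1]
      calc |∫ v, (F y - F v) ∂μ| ≤ ∫ v, |F y - F v| ∂μ := by
            simpa [Real.norm_eq_abs] using
              norm_integral_le_integral_norm (μ := μ) (fun v => F y - F v)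
        _ ≤ ∫ v, (‖y‖ + ‖v‖) ∂μ := by
            apply integral_mono ((integrable_const (F y)).sub hFi).abs
              ((integrable_const ‖y‖).add hni)
            intro v
            calc |F y - F v| ≤ ‖y - v‖ := hF y v
              _ ≤ ‖y‖ + ‖v‖ := norm_sub_le y v
        _ = ‖y‖ + m := by
            rw [integral_add (integrable_const ‖y‖) hni, integral_const]
            simp [hm]
    calc |Z y| = |lam| * |F y - c| := by rw [hZ]; simp [abs_mul]
      _ ≤ |lam| * (‖y‖ + m) := by
          apply mul_le_mul_of_nonneg_left h2' (abs_nonneg lam)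
  have hZbd2 : ∀ y, |Z y| ≤ (‖y‖ + m)/(2*ρ) := by
    intro y
    calc |Z y| ≤ |lam| * (‖y‖ + m) := hZbd y
      _ ≤ (1/(2*ρ)) * (‖y‖ + m) := by
          apply mul_le_mul_of_nonneg_right hlam (by positivity)
      _ = (‖y‖ + m)/(2*ρ) := by ring
  have hdom : ∀ y, Z y ^ 2 * Real.exp |Z y| ≤ lam^2 * (48 * ρ^2 * Real.exp (‖y‖/ρ)) := by
    intro y
    have hs1 : Z y ^ 2 ≤ lam^2 * (‖y‖ + m)^2 := by
      have := hZbd y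
      have h' : |Z y|^2 ≤ (|lam| * (‖y‖ + m))^2 :=
        pow_le_pow_left₀ (abs_nonneg _) this 2
      rw [sq_abs] at h'
      calc Z y ^ 2 ≤ (|lam| * (‖y‖ + m))^2 := h'
        _ = lam^2 * (‖y‖ + m)^2 := by rw [mul_pow, sq_abs]
    have hs2 : Real.exp |Z y| ≤ Real.exp ((‖y‖ + m)/(2*ρ)) := Real.exp_le_exp.2 (hZbd2 y)
    calc Z y ^ 2 * Real.exp |Z y| ≤ (lam^2 * (‖y‖ + m)^2) * Real.exp ((‖y‖ + m)/(2*ρ)) := by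
          apply mul_le_mul hs1 hs2 (Real.exp_pos _).le (by positivity)
      _ = lam^2 * ((‖y‖ + m)^2 * Real.exp ((‖y‖ + m)/(2*ρ))) := by ring
      _ ≤ lam^2 * (48 * ρ^2 * Real.exp (‖y‖/ρ)) := by
          apply mul_le_mul_of_nonneg_left (key_real hρ hm0 hmρ (norm_nonneg y)) (sq_nonneg lam)
  have hVint : Integrable (fun y => Z y ^ 2 * Real.exp |Z y|) μ := by
    apply Integrable.mono' ((hInt.const_mul (48 * ρ^2)).const_mul (lam^2))
    · exact Continuous.aestronglyMeasurable
        ((hZm.pow 2).mul (Real.continuous_exp.comp hZm.abs))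
    · filter_upwards with y
      rw [Real.norm_eq_abs, abs_of_nonneg (by positivity)]
      calc Z y ^ 2 * Real.exp |Z y| ≤ lam^2 * (48 * ρ^2 * Real.exp (‖y‖/ρ)) := hdom y
        _ = lam^2 * (48 * ρ^2 * Real.exp (‖y‖/ρ)) := rfl
  have hV : ∫ y, Z y ^ 2 * Real.exp |Z y| ∂μ ≤ 96 * lam^2 * ρ^2 := by
    calc ∫ y, Z y ^ 2 * Real.exp |Z y| ∂μ
        ≤ ∫ y, lam^2 * (48 * ρ^2 * Real.exp (‖y‖/ρ)) ∂μ := by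
          apply integral_mono hVint ((hInt.const_mul (48 * ρ^2)).const_mul (lam^2))
          intro y; exact hdom y
      _ = lam^2 * (48 * ρ^2 * ∫ y, Real.exp (‖y‖/ρ) ∂μ) := by
          rw [integral_const_mul, integral_const_mul]
      _ ≤ lam^2 * (48 * ρ^2 * 2) := by
          apply mul_le_mul_of_nonneg_left _ (sq_nonneg lam)
          apply mul_le_mul_of_nonneg_left h2 (by positivity)
      _ = 96 * lam^2 * ρ^2 := by ring
  calc ∫ y, Real.exp (lam * (F y - c)) ∂μ = ∫ y, Real.exp (Z y) ∂μ := rfl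
    _ ≤ Real.exp (∫ y, Z y ^ 2 * Real.exp |Z y| ∂μ) :=
        mgf_step μ Z hZm.aestronglyMeasurable hZint hZ0 hVint
    _ ≤ Real.exp (96 * lam^2 * ρ^2) := Real.exp_le_exp.2 hV

lemma prod_exp_integrable (hρ : 0 < ρ) (hInt : Integrable (fun x => Real.exp (‖x‖/ρ)) μ)
    (n : ℕ) :
    Integrable (fun x : Fin n → B => ∏ i, Real.exp (‖x i‖/ρ))
      (Measure.pi fun _ : Fin n => μ) := by
  letI : MeasureSpace B := ⟨μ⟩
  have h := Integrable.fin_nat_prod (𝕜 := ℝ) (f := fun _ : Fin n => fun y : B => Real.exp (‖y‖/ρ))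
    (fun i => hInt)
  exact h

lemma coordLip_continuous {n : ℕ} {G : (Fin n → B) → ℝ}
    (hG : ∀ x y, |G x - G y| ≤ ∑ i, ‖x i - y i‖) : Continuous G := by
  refine LipschitzWith.continuous (K := n) (LipschitzWith.of_dist_le_mul fun x y => ?_)
  rw [Real.dist_eq]
  calc |G x - G y| ≤ ∑ i, ‖x i - y i‖ := hG x y
    _ = ∑ i, dist (x i) (y i) := by simp [dist_eq_norm]
    _ ≤ Finset.univ.card • dist x y :=
        Finset.sum_le_card_nsmul _ _ _ (fun i _ => dist_le_pi_dist x y i)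
    _ = (n : ℝ) * dist x y := by simp [mul_comm]

lemma sum_norm_le_prod_exp (hρ : 0 < ρ) {n : ℕ} (x : Fin n → B) :
    ∑ i, ‖x i‖ ≤ ρ * n * ∏ i, Real.exp (‖x i‖/ρ) := by
  have h1 : ∀ i : Fin n, ‖x i‖ ≤ ρ * ∏ j, Real.exp (‖x j‖/ρ) := by
    intro i
    have h2 : Real.exp (‖x i‖/ρ) ≤ ∏ j, Real.exp (‖x j‖/ρ) := by
      rw [← Real.exp_sum]
      apply Real.exp_le_exp.2
      exact Finset.single_le_sum (f := fun j => ‖x j‖/ρ)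
        (fun j _ => by positivity) (Finset.mem_univ i)
    have h3 := self_le_exp (‖x i‖/ρ)
    calc ‖x i‖ = ρ * (‖x i‖/ρ) := by field_simp
      _ ≤ ρ * Real.exp (‖x i‖/ρ) := by nlinarith
      _ ≤ ρ * ∏ j, Real.exp (‖x j‖/ρ) := by nlinarith
  calc ∑ i, ‖x i‖ ≤ ∑ _i : Fin n, ρ * ∏ j, Real.exp (‖x j‖/ρ) :=
        Finset.sum_le_sum fun i _ => h1 i
    _ = ρ * n * ∏ j, Real.exp (‖x j‖/ρ) := by
        rw [Finset.sum_const]; simp [mul_comm, mul_assoc, mul_left_comm]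

lemma coordLip_integrable (hρ : 0 < ρ) (hInt : Integrable (fun x => Real.exp (‖x‖/ρ)) μ)
    {n : ℕ} {G : (Fin n → B) → ℝ}
    (hG : ∀ x y, |G x - G y| ≤ ∑ i, ‖x i - y i‖) :
    Integrable G (Measure.pi fun _ : Fin n => μ) := by
  set z : Fin n → B := fun _ => 0 with hz
  apply Integrable.mono' ((integrable_const |G z|).add
    (((prod_exp_integrable hρ hInt n)).const_mul (ρ * n)))
    (coordLip_continuous hG).aestronglyMeasurable
  filter_upwards with x
  rw [Real.norm_eq_abs]
  have h1 : |G x - G z| ≤ ∑ i, ‖x i‖ := by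
    have := hG x z
    simpa [hz] using this
  have h2 := sum_norm_le_prod_exp hρ (n := n) x
  have h3 : |G x| - |G z| ≤ |G x - G z| := by
    have := abs_sub_abs_le_abs_sub (G x) (G z); linarith
  simp only [Pi.add_apply]
  linarith

lemma coordLip_exp_integrable (hρ : 0 < ρ) (hInt : Integrable (fun x => Real.exp (‖x‖/ρ)) μ)
    {n : ℕ} {G : (Fin n → B) → ℝ}
    (hG : ∀ x y, |G x - G y| ≤ ∑ i, ‖x i - y i‖) {lam : ℝ} (hlam : |lam| ≤ 1/(2*ρ)) (c : ℝ) :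
    Integrable (fun x => Real.exp (lam * (G x - c))) (Measure.pi fun _ : Fin n => μ) := by
  set z : Fin n → B := fun _ => 0 with hz
  have hGc : Continuous G := coordLip_continuous hG
  apply Integrable.mono' ((prod_exp_integrable hρ hInt n).const_mul (Real.exp (lam * (G z - c))))
    (Continuous.aestronglyMeasurable (by fun_prop))
  filter_upwards with x
  rw [Real.norm_eq_abs, abs_of_pos (Real.exp_pos _)]
  have h1 : lam * (G x - c) ≤ lam * (G z - c) + ∑ i, (‖x i‖/ρ) := by
    have hxz : |G x - G z| ≤ ∑ i, ‖x i‖ := by simpa [hz] using hG x z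
    have h2 : lam * (G x - G z) ≤ |lam| * ∑ i, ‖x i‖ := by
      calc lam * (G x - G z) ≤ |lam * (G x - G z)| := le_abs_self _
        _ = |lam| * |G x - G z| := abs_mul _ _
        _ ≤ |lam| * ∑ i, ‖x i‖ := mul_le_mul_of_nonneg_left hxz (abs_nonneg _)
    have h3 : |lam| * ∑ i, ‖x i‖ ≤ ∑ i, (‖x i‖/ρ) := by
      have hsum : 0 ≤ ∑ i, ‖x i‖ := Finset.sum_nonneg fun i _ => norm_nonneg _
      have h4 : |lam| * ∑ i, ‖x i‖ ≤ (1/ρ) * ∑ i, ‖x i‖ := by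
        apply mul_le_mul_of_nonneg_right _ hsum
        calc |lam| ≤ 1/(2*ρ) := hlam
          _ ≤ 1/ρ := by
            apply div_le_div_of_nonneg_left one_pos.le hρ; linarith
      calc |lam| * ∑ i, ‖x i‖ ≤ (1/ρ) * ∑ i, ‖x i‖ := h4
        _ = ∑ i, (‖x i‖/ρ) := by rw [Finset.mul_sum]; congr 1; ext i; ring
    nlinarith
  calc Real.exp (lam * (G x - c)) ≤ Real.exp (lam * (G z - c) + ∑ i, (‖x i‖/ρ)) :=
        Real.exp_le_exp.2 h1
    _ = Real.exp (lam * (G z - c)) * ∏ i, Real.exp (‖x i‖/ρ) := by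
        rw [Real.exp_add, Real.exp_sum]

/-- McDiarmid-type MGF bound for coordinate-Lipschitz functionals of i.i.d. ψ₁ variables. -/
lemma mcdiarmid_mgf (hρ : 0 < ρ) (hInt : Integrable (fun x => Real.exp (‖x‖/ρ)) μ)
    (h2 : ∫ x, Real.exp (‖x‖/ρ) ∂μ ≤ 2) {lam : ℝ} (hlam : |lam| ≤ 1/(2*ρ)) :
    ∀ (n : ℕ) (G : (Fin n → B) → ℝ), (∀ x y, |G x - G y| ≤ ∑ i, ‖x i - y i‖) →
      ∫ x, Real.exp (lam * (G x - ∫ x', G x' ∂(Measure.pi fun _ : Fin n => μ)))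
          ∂(Measure.pi fun _ : Fin n => μ)
        ≤ Real.exp (96 * n * lam^2 * ρ^2) := by
  intro n
  induction n with
  | zero =>
    intro G hG
    have hconst : ∀ x, G x = G default := by
      intro x
      have h := hG x default
      simp only [Finset.univ_eq_empty, Finset.sum_empty] at h
      have := abs_nonneg (G x - G default)
      have h0 : |G x - G default| = 0 := le_antisymm h this
      have := abs_eq_zero.1 h0
      linarith
    have hGf : G = fun _ => G default := funext hconst
    rw [hGf]
    rw [integral_const]
    simp [Real.exp_zero]
  | succ n ih =>
    intro G hG
    set Pn : Measure (Fin n → B) := Measure.pi fun _ : Fin n => μ with hPn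
    set PN : Measure (Fin (n+1) → B) := Measure.pi fun _ : Fin (n+1) => μ with hPN
    set e := MeasurableEquiv.piFinSuccAbove (fun _ : Fin (n+1) => B) 0 with he
    have hmp : MeasurePreserving e PN (μ.prod Pn) :=
      measurePreserving_piFinSuccAbove (fun _ : Fin (n+1) => μ) 0
    have hemb := MeasurableEquiv.measurableEmbedding e
    have hconsz : ∀ z : Fin (n+1) → B, Fin.cons ((e z).1) ((e z).2) = z := by
      intro z
      have h1 : e z = (z 0, Fin.tail z) := by
        simp [he, MeasurableEquiv.piFinSuccAbove, Fin.insertNthEquiv_zero]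
      rw [h1]
      exact Fin.cons_self_tail z
    set EG : ℝ := ∫ x', G x' ∂PN with hEG
    set g : B × (Fin n → B) → ℝ := fun p => Real.exp (lam * (G (Fin.cons p.1 p.2) - EG))
      with hg
    have hGexp : Integrable (fun z => Real.exp (lam * (G z - EG))) PN :=
      coordLip_exp_integrable hρ hInt hG hlam EG
    have hge : ∀ z : Fin (n+1) → B, g (e z) = Real.exp (lam * (G z - EG)) := by
      intro z; rw [hg]; simp only; rw [hconsz z]
    have hgint : Integrable g (μ.prod Pn) := by
      rw [← hmp.integrable_comp_emb hemb]
      have : (g ∘ e) = fun z => Real.exp (lam * (G z - EG)) := funext hge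
      rw [this]; exact hGexp
    have hstep1 : ∫ x, Real.exp (lam * (G x - EG)) ∂PN = ∫ p, g p ∂(μ.prod Pn) := by
      rw [← hmp.integral_comp hemb g]
      exact integral_congr_ae (Filter.Eventually.of_forall fun z => (hge z).symm)
    set G' : (Fin n → B) → ℝ := fun x => ∫ y, G (Fin.cons y x) ∂μ with hG'
    have hFlip : ∀ (x : Fin n → B) (u v : B),
        |G (Fin.cons u x) - G (Fin.cons v x)| ≤ ‖u - v‖ := by
      intro x u v
      have h := hG (Fin.cons u x) (Fin.cons v x)
      simpa [Fin.sum_univ_succ] using h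
    have hFint : ∀ x : Fin n → B, Integrable (fun u => G (Fin.cons u x)) μ := fun x =>
      lip_integrable hρ hInt (hFlip x)
    have hG'lip : ∀ x y, |G' x - G' y| ≤ ∑ i, ‖x i - y i‖ := by
      intro x y
      have hdiff : G' x - G' y = ∫ u, (G (Fin.cons u x) - G (Fin.cons u y)) ∂μ := by
        rw [hG']; simp only; rw [integral_sub (hFint x) (hFint y)]
      rw [hdiff]
      calc |∫ u, (G (Fin.cons u x) - G (Fin.cons u y)) ∂μ|
          ≤ ∫ u, |G (Fin.cons u x) - G (Fin.cons u y)| ∂μ := by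
            simpa [Real.norm_eq_abs] using
              norm_integral_le_integral_norm (μ := μ)
                (fun u => G (Fin.cons u x) - G (Fin.cons u y))
        _ ≤ ∫ _u, (∑ i, ‖x i - y i‖) ∂μ := by
            apply integral_mono ((hFint x).sub (hFint y)).abs (integrable_const _)
            intro u
            have h := hG (Fin.cons u x) (Fin.cons u y)
            simpa [Fin.sum_univ_succ] using h
        _ = ∑ i, ‖x i - y i‖ := by rw [integral_const]; simp
    have hinner : ∀ x : Fin n → B, ∫ y, g (y, x) ∂μ ≤
        Real.exp (lam * (G' x - EG)) * Real.exp (96 * lam^2 * ρ^2) := by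
      intro x
      have key := lip_mgf hρ hInt h2 hlam (hFlip x)
      have hid : ∀ y : B, g (y, x) =
          Real.exp (lam * (G' x - EG)) * Real.exp (lam * (G (Fin.cons y x) - G' x)) := by
        intro y
        rw [hg]; simp only
        rw [← Real.exp_add]; congr 1; ring
      calc ∫ y, g (y, x) ∂μ
          = Real.exp (lam * (G' x - EG)) *
            ∫ y, Real.exp (lam * (G (Fin.cons y x) - G' x)) ∂μ := by
            simp_rw [hid]; rw [integral_const_mul]
        _ ≤ Real.exp (lam * (G' x - EG)) * Real.exp (96 * lam^2 * ρ^2) :=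
            mul_le_mul_of_nonneg_left key (Real.exp_pos _).le
    have houter_int : Integrable (fun x => ∫ y, g (y, x) ∂μ) Pn :=
      hgint.integral_prod_right
    have hG'exp : Integrable (fun x => Real.exp (lam * (G' x - EG))) Pn :=
      coordLip_exp_integrable hρ hInt hG'lip hlam EG
    have hfub : ∫ p, g p ∂(μ.prod Pn) = ∫ x, ∫ y, g (y, x) ∂μ ∂Pn := by
      rw [integral_prod g hgint]
      exact integral_integral_swap hgint
    have hEGfub : EG = ∫ x, G' x ∂Pn := by
      have hGint : Integrable G PN := coordLip_integrable hρ hInt hG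
      have hHint : Integrable (fun p : B × (Fin n → B) => G (Fin.cons p.1 p.2)) (μ.prod Pn) := by
        rw [← hmp.integrable_comp_emb hemb]
        have : ((fun p : B × (Fin n → B) => G (Fin.cons p.1 p.2)) ∘ e) = G := by
          funext z; simp only [Function.comp_apply]; rw [hconsz z]
        rw [this]; exact hGint
      calc EG = ∫ p, G (Fin.cons p.1 p.2) ∂(μ.prod Pn) := by
            rw [hEG, ← hmp.integral_comp hemb (fun p => G (Fin.cons p.1 p.2))]
            exact integral_congr_ae (Filter.Eventually.of_forall fun z => by
              simp only; rw [hconsz z])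
        _ = ∫ x, ∫ y, G (Fin.cons y x) ∂μ ∂Pn := by
            rw [integral_prod _ hHint]
            exact integral_integral_swap hHint
        _ = ∫ x, G' x ∂Pn := rfl
    have hIH := ih G' hG'lip
    calc ∫ x, Real.exp (lam * (G x - EG)) ∂PN = ∫ p, g p ∂(μ.prod Pn) := hstep1
      _ = ∫ x, ∫ y, g (y, x) ∂μ ∂Pn := hfub
      _ ≤ ∫ x, Real.exp (lam * (G' x - EG)) * Real.exp (96 * lam^2 * ρ^2) ∂Pn := by
          apply integral_mono houter_int (hG'exp.mul_const _) hinner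
      _ = (∫ x, Real.exp (lam * (G' x - EG)) ∂Pn) * Real.exp (96 * lam^2 * ρ^2) := by
          rw [integral_mul_const]
      _ ≤ Real.exp (96 * n * lam^2 * ρ^2) * Real.exp (96 * lam^2 * ρ^2) := by
          apply mul_le_mul_of_nonneg_right _ (Real.exp_pos _).le
          rw [hEGfub]
          exact hIH
      _ = Real.exp (96 * (n+1 : ℕ) * lam^2 * ρ^2) := by
          rw [← Real.exp_add]; congr 1; push_cast; ring

lemma chernoff_opt {ρ t : ℝ} {n : ℕ} (hn : 1 ≤ n) (hρ : 0 < ρ) (ht : 0 < t) :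
    ∃ lam : ℝ, 0 < lam ∧ lam ≤ 1/(2*ρ) ∧
      -lam*t + 96*n*lam^2*ρ^2 ≤ -(1/384) * min (t^2/(n*ρ^2)) (t/ρ) := by
  have hn0 : (0:ℝ) < n := by exact_mod_cast hn
  rcases le_or_gt (t/(192*n*ρ^2)) (1/(2*ρ)) with hc | hc
  · refine ⟨t/(192*n*ρ^2), by positivity, hc, ?_⟩
    have hval : -(t/(192*n*ρ^2))*t + 96*n*(t/(192*n*ρ^2))^2*ρ^2
        = -(1/384) * (t^2/(n*ρ^2)) := by
      field_simp
      ring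
    rw [hval]
    have : min (t^2/(n*ρ^2)) (t/ρ) ≤ t^2/(n*ρ^2) := min_le_left _ _
    nlinarith
  · refine ⟨1/(2*ρ), by positivity, le_refl _, ?_⟩
    have hkey : 96*n*ρ ≤ t := by
      rw [div_lt_div_iff₀ (by positivity) (by positivity)] at hc
      nlinarith
    have hval : -(1/(2*ρ))*t + 96*n*(1/(2*ρ))^2*ρ^2 = -t/(2*ρ) + 24*n := by
      field_simp
      ring
    rw [hval]
    have h24 : (24:ℝ)*n ≤ t/(4*ρ) := by
      rw [le_div_iff₀ (by positivity)]
      nlinarith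
    have hmin : min (t^2/(n*ρ^2)) (t/ρ) ≤ t/ρ := min_le_right _ _
    have : -(1/384) * min (t^2/(n*ρ^2)) (t/ρ) ≥ -(1/384) * (t/ρ) := by nlinarith
    have htρ : -t/(2*ρ) + 24*n ≤ -(1/384) * (t/ρ) := by
      have h1 : -t/(2*ρ) + 24*n ≤ -t/(2*ρ) + t/(4*ρ) := by linarith
      have h2 : -t/(2*ρ) + t/(4*ρ) = -(t/(4*ρ)) := by ring
      have h3 : -(t/(4*ρ)) ≤ -(1/384) * (t/ρ) := by
        have htρ0 : 0 ≤ t/ρ := by positivity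
        have ha : (1/384:ℝ)*(t/ρ) ≤ (1/4)*(t/ρ) := by nlinarith
        have hb : (1/4:ℝ)*(t/ρ) = t/(4*ρ) := by ring
        linarith
      linarith
    linarith

section Banach2

variable {B : Type*} [NormedAddCommGroup B] [MeasurableSpace B] [BorelSpace B]
  [SecondCountableTopology B]
  {μ : Measure B} [IsProbabilityMeasure μ] {ρ : ℝ}

lemma one_sided_tail (hρ : 0 < ρ) (hInt : Integrable (fun x => Real.exp (‖x‖/ρ)) μ)
    (h2 : ∫ x, Real.exp (‖x‖/ρ) ∂μ ≤ 2) {n : ℕ} {G : (Fin n → B) → ℝ}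
    (hG : ∀ x y, |G x - G y| ≤ ∑ i, ‖x i - y i‖) {lam : ℝ}
    (hl0 : 0 < lam) (hl : lam ≤ 1/(2*ρ)) (t : ℝ) :
    ((Measure.pi fun _ : Fin n => μ)
        {x | t ≤ G x - ∫ x', G x' ∂(Measure.pi fun _ : Fin n => μ)}).toReal
      ≤ Real.exp (-lam*t + 96*n*lam^2*ρ^2) := by
  set P : Measure (Fin n → B) := Measure.pi fun _ : Fin n => μ with hP
  set c : ℝ := ∫ x', G x' ∂P with hc
  have hlam : |lam| ≤ 1/(2*ρ) := by rwa [abs_of_pos hl0]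
  have hint : Integrable (fun x => Real.exp (lam * (G x - c))) P :=
    coordLip_exp_integrable hρ hInt hG hlam c
  have h := ProbabilityTheory.measure_ge_le_exp_mul_mgf (X := fun x => G x - c) (μ := P)
    (t := lam) t hl0.le hint
  have hmgf : ProbabilityTheory.mgf (fun x => G x - c) P lam ≤ Real.exp (96*n*lam^2*ρ^2) :=
    mcdiarmid_mgf hρ hInt h2 hlam n G hG
  calc (P {x | t ≤ G x - c}).toReal
      ≤ Real.exp (-lam * t) * ProbabilityTheory.mgf (fun x => G x - c) P lam := h
    _ ≤ Real.exp (-lam * t) * Real.exp (96*n*lam^2*ρ^2) := by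
        apply mul_le_mul_of_nonneg_left hmgf (Real.exp_pos _).le
    _ = Real.exp (-lam*t + 96*n*lam^2*ρ^2) := by rw [← Real.exp_add]

/-- Two-sided tail bound on the product space. -/
lemma pi_tail (hρ : 0 < ρ) (hInt : Integrable (fun x => Real.exp (‖x‖/ρ)) μ)
    (h2 : ∫ x, Real.exp (‖x‖/ρ) ∂μ ≤ 2) {n : ℕ} (hn : 1 ≤ n) {t : ℝ} (ht : 0 < t) :
    ((Measure.pi fun _ : Fin n => μ)
        {x | t ≤ |‖∑ i, x i‖ - ∫ x', ‖∑ i, x' i‖ ∂(Measure.pi fun _ : Fin n => μ)|}).toReal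
      ≤ 2 * Real.exp (-(1/384) * min (t^2/(n*ρ^2)) (t/ρ)) := by
  set P : Measure (Fin n → B) := Measure.pi fun _ : Fin n => μ with hP
  set f : (Fin n → B) → ℝ := fun x => ‖∑ i, x i‖ with hf
  have hflip : ∀ x y : Fin n → B, |f x - f y| ≤ ∑ i, ‖x i - y i‖ := by
    intro x y
    calc |f x - f y| ≤ ‖(∑ i, x i) - ∑ i, y i‖ := abs_norm_sub_norm_le _ _
      _ = ‖∑ i, (x i - y i)‖ := by rw [Finset.sum_sub_distrib]
      _ ≤ ∑ i, ‖x i - y i‖ := norm_sum_le _ _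
  have hneglip : ∀ x y : Fin n → B, |(-f) x - (-f) y| ≤ ∑ i, ‖x i - y i‖ := by
    intro x y
    have h := hflip y x
    have heq : ∀ i : Fin n, ‖y i - x i‖ = ‖x i - y i‖ := fun i => norm_sub_rev _ _
    simp only [heq] at h
    calc |(-f) x - (-f) y| = |f y - f x| := by
          simp only [Pi.neg_apply]; rw [show -f x - -f y = f y - f x by ring]
      _ ≤ ∑ i, ‖x i - y i‖ := h
  set c : ℝ := ∫ x', f x' ∂P with hc
  obtain ⟨lam, hl0, hl, hval⟩ := chernoff_opt (ρ := ρ) (t := t) hn hρ ht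
  have h1 : (P {x | t ≤ f x - c}).toReal ≤ Real.exp (-lam*t + 96*n*lam^2*ρ^2) :=
    one_sided_tail hρ hInt h2 hflip hl0 hl t
  have hnegint : ∫ x', (-f) x' ∂P = -c := by
    rw [hc]; simp only [Pi.neg_apply]; rw [integral_neg]
  have h2' : (P {x | t ≤ c - f x}).toReal ≤ Real.exp (-lam*t + 96*n*lam^2*ρ^2) := by
    have := one_sided_tail hρ hInt h2 hneglip hl0 hl t
    rw [hnegint] at this
    convert this using 3
    ext x
    simp only [Pi.neg_apply, Set.mem_setOf_eq]
    constructor <;> intro h <;> linarith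
  have hsub : {x | t ≤ |f x - c|} ⊆ {x | t ≤ f x - c} ∪ {x | t ≤ c - f x} := by
    intro x hx
    simp only [Set.mem_setOf_eq] at hx
    rcases abs_cases (f x - c) with ⟨heq, _⟩ | ⟨heq, _⟩
    · left; simp only [Set.mem_setOf_eq]; linarith
    · right; simp only [Set.mem_setOf_eq]; linarith
  have hmeas : (P {x | t ≤ |f x - c|}).toReal
      ≤ (P {x | t ≤ f x - c}).toReal + (P {x | t ≤ c - f x}).toReal := by
    have hle : P {x | t ≤ |f x - c|} ≤ P {x | t ≤ f x - c} + P {x | t ≤ c - f x} :=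
      (measure_mono hsub).trans (measure_union_le _ _)
    have hfin1 : P {x | t ≤ f x - c} ≠ ⊤ := measure_ne_top _ _
    have hfin2 : P {x | t ≤ c - f x} ≠ ⊤ := measure_ne_top _ _
    calc (P {x | t ≤ |f x - c|}).toReal
        ≤ (P {x | t ≤ f x - c} + P {x | t ≤ c - f x}).toReal :=
          ENNReal.toReal_mono (by simp [hfin1, hfin2, ENNReal.add_ne_top]) hle
      _ = (P {x | t ≤ f x - c}).toReal + (P {x | t ≤ c - f x}).toReal :=
          ENNReal.toReal_add hfin1 hfin2
  have hexp : Real.exp (-lam*t + 96*n*lam^2*ρ^2)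
      ≤ Real.exp (-(1/384) * min (t^2/(n*ρ^2)) (t/ρ)) := Real.exp_le_exp.2 hval
  calc (P {x | t ≤ |f x - c|}).toReal
      ≤ (P {x | t ≤ f x - c}).toReal + (P {x | t ≤ c - f x}).toReal := hmeas
    _ ≤ Real.exp (-lam*t + 96*n*lam^2*ρ^2) + Real.exp (-lam*t + 96*n*lam^2*ρ^2) := by linarith
    _ ≤ 2 * Real.exp (-(1/384) * min (t^2/(n*ρ^2)) (t/ρ)) := by linarith

end Banach2

end Banach

section Transfer

variable {Ω : Type*} [MeasurableSpace Ω] {ℙ : Measure Ω} [IsProbabilityMeasure ℙ]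
  {B : Type*} [NormedAddCommGroup B] [instB3 : MeasurableSpace B] [BorelSpace B]
  [SecondCountableTopology B]

lemma vec_law {U : ℕ → Ω → B} (hU : ∀ i, Measurable (U i))
    (hIndep : @ProbabilityTheory.iIndepFun Ω ℕ _ (fun _ => B) (fun _ => instB3) U ℙ)
    (hId : ∀ i, ProbabilityTheory.IdentDistrib (U i) (U 0) ℙ ℙ) (n : ℕ) :
    ℙ.map (fun ω (i : Fin n) => U i ω) =
      Measure.pi (fun _ : Fin n => ℙ.map (U 0)) := by
  have hvec : Measurable (fun ω (i : Fin n) => U i ω) :=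
    measurable_pi_lambda _ (fun i => hU i)
  haveI : IsProbabilityMeasure (ℙ.map (U 0)) := Measure.isProbabilityMeasure_map (hU 0).aemeasurable
  refine Eq.symm (Measure.pi_eq fun s hs => ?_)
  classical
  set sets' : ℕ → Set B := fun k => if h : k < n then s ⟨k, h⟩ else Set.univ with hsets'
  have hsets'meas : ∀ k, k ∈ Finset.range n → MeasurableSet (sets' k) := by
    intro k _
    rw [hsets']
    by_cases h : k < n
    · simp only [dif_pos h]; exact hs _
    · simp only [dif_neg h]; exact MeasurableSet.univ
  have hpre : (fun ω (i : Fin n) => U i ω) ⁻¹' (Set.pi Set.univ s)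
      = ⋂ k ∈ Finset.range n, U k ⁻¹' sets' k := by
    ext ω
    simp only [Set.mem_preimage, Set.mem_pi, Set.mem_univ, forall_true_left,
      Set.mem_iInter, Finset.mem_range, hsets']
    constructor
    · intro h k hk
      simp only [Set.mem_preimage, dif_pos hk]
      exact h ⟨k, hk⟩
    · intro h i
      have := h i.val i.isLt
      simp only [Set.mem_preimage, dif_pos i.isLt, Fin.eta] at this
      exact this
  have hmulti := hIndep.measure_inter_preimage_eq_mul (Finset.range n)
    (sets := sets') hsets'meas
  rw [Measure.map_apply hvec (MeasurableSet.univ_pi hs), hpre, hmulti]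
  have hmarg : ∀ i : Fin n, ℙ (U i ⁻¹' s i) = (ℙ.map (U 0)) (s i) := by
    intro i
    rw [← (hId i.val).map_eq, Measure.map_apply (hU i.val) (hs i)]
  calc ∏ k ∈ Finset.range n, ℙ (U k ⁻¹' sets' k)
      = ∏ i : Fin n, ℙ (U i.val ⁻¹' sets' i.val) :=
        (Fin.prod_univ_eq_prod_range (fun k => ℙ (U k ⁻¹' sets' k)) n).symm
    _ = ∏ i : Fin n, (ℙ.map (U 0)) (s i) := by
        apply Finset.prod_congr rfl
        intro i _
        rw [hsets']
        simp only [dif_pos i.isLt, Fin.eta]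
        exact hmarg i
  -- orient: goal is `∏ i, (ℙ.map (U 0)) (s i) = ...`? handled above

end Transfer


/-- The Orlicz `ψ₁` norm. -/
noncomputable def psiOneNorm {Ω B : Type*} [MeasurableSpace Ω] (ℙ : Measure Ω)
    [NormedAddCommGroup B] (X : Ω → B) : ℝ :=
  sInf {ρ : ℝ | 0 < ρ ∧ ∫ ω, Real.exp (‖X ω‖ / ρ) ∂ℙ ≤ 2}

/-- Bernstein `ψ₁` inequality for Banach space valued i.i.d. mean-zero random
variables: the norm of the sum concentrates around its mean at rate
`2 exp(−c min(t²/(n‖U‖²_{ψ₁}), t/‖U‖_{ψ₁}))` for a universal constant `c`. -/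
theorem bernstein_psi_one_banach :
    ∃ c : ℝ, 0 < c ∧
      ∀ (Ω : Type) [inst : MeasurableSpace Ω] (ℙ : Measure Ω),
        IsProbabilityMeasure ℙ →
      ∀ (B : Type) [instB : NormedAddCommGroup B] [instB2 : NormedSpace ℝ B]
        [instB3 : MeasurableSpace B] [instB4 : BorelSpace B]
        [instB5 : SecondCountableTopology B] [instB6 : CompleteSpace B],
      ∀ (U : ℕ → Ω → B), (∀ i, Measurable (U i)) →
        @ProbabilityTheory.iIndepFun Ω ℕ _ (fun _ => B) (fun _ => instB3) U ℙ →
        (∀ i, ProbabilityTheory.IdentDistrib (U i) (U 0) ℙ ℙ) →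
        Integrable (U 0) ℙ → (∫ ω, U 0 ω ∂ℙ) = 0 →
        {ρ : ℝ | 0 < ρ ∧ ∫ ω, Real.exp (‖U 0 ω‖ / ρ) ∂ℙ ≤ 2}.Nonempty →
      ∀ (n : ℕ) (t : ℝ), 0 < t →
        (ℙ {ω | t ≤ |‖∑ i ∈ Finset.range n, U i ω‖ -
            ∫ ω', ‖∑ i ∈ Finset.range n, U i ω'‖ ∂ℙ|}).toReal ≤
          2 * Real.exp (-c * min (t ^ 2 / (n * psiOneNorm ℙ (U 0) ^ 2))
            (t / psiOneNorm ℙ (U 0))) := by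
  refine ⟨1/1536, by norm_num, ?_⟩
  intro Ω inst ℙ hprob B instB instB2 instB3 instB4 instB5 instB6 U hU hIndep hId _hint _hmean
    hne n t ht
  haveI := hprob
  set S : Set ℝ := {ρ : ℝ | 0 < ρ ∧ ∫ ω, Real.exp (‖U 0 ω‖ / ρ) ∂ℙ ≤ 2} with hS
  set ρ₀ : ℝ := psiOneNorm ℙ (U 0) with hρ₀
  have hρ₀sInf : ρ₀ = sInf S := rfl
  have hbdd : BddBelow S := ⟨0, fun x hx => hx.1.le⟩
  have hρ₀nonneg : 0 ≤ ρ₀ := by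
    rw [hρ₀sInf]
    exact Real.sInf_nonneg (fun x hx => hx.1.le)
  -- trivial case n = 0
  rcases Nat.eq_zero_or_pos n with hn0 | hn
  · subst hn0
    have hempty : {ω | t ≤ |‖∑ i ∈ Finset.range 0, U i ω‖ -
        ∫ ω', ‖∑ i ∈ Finset.range 0, U i ω'‖ ∂ℙ|} = ∅ := by
      ext ω
      simp only [Finset.range_zero, Finset.sum_empty, norm_zero, integral_const,
        measure_univ, probReal_univ, ENNReal.toReal_one, smul_eq_mul, mul_zero, one_mul, sub_zero, abs_zero,
        Set.mem_setOf_eq, Set.mem_empty_iff_false, iff_false, not_le]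
      exact ht
    rw [hempty]
    simp only [measure_empty, ENNReal.toReal_zero]
    positivity
  -- trivial case ρ₀ = 0
  rcases eq_or_lt_of_le hρ₀nonneg with hρ00 | hρ0pos
  · set A : Set Ω := {ω | t ≤ |‖∑ i ∈ Finset.range n, U i ω‖ -
        ∫ ω', ‖∑ i ∈ Finset.range n, U i ω'‖ ∂ℙ|} with hA
    have hLHS : (ℙ A).toReal ≤ 1 := by
      have h1 : ℙ A ≤ ℙ Set.univ := measure_mono (Set.subset_univ A)
      have h2 : (ℙ (Set.univ : Set Ω)) = 1 := measure_univ
      calc (ℙ A).toReal ≤ (ℙ (Set.univ : Set Ω)).toReal :=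
            ENNReal.toReal_mono (by simp [h2]) h1
        _ = 1 := by rw [h2]; simp
    have hRHS : 2 * Real.exp (-(1/1536) * min (t ^ 2 / (n * ρ₀ ^ 2)) (t / ρ₀)) = 2 := by
      rw [← hρ00]
      norm_num
    rw [← hρ₀] at *
    rw [hRHS]
    linarith
  -- main case: 0 < ρ₀ and 1 ≤ n
  obtain ⟨ρs, hρsS, hρslt⟩ : ∃ x ∈ S, x < 2*ρ₀ := by
    have hlt : sInf S < 2*ρ₀ := by rw [← hρ₀sInf]; linarith
    exact (csInf_lt_iff hbdd hne).1 hlt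
  have hρspos : 0 < ρs := hρsS.1
  have h2Ω : ∫ ω, Real.exp (‖U 0 ω‖ / ρs) ∂ℙ ≤ 2 := hρsS.2
  have hρ₀le : ρ₀ ≤ ρs := by rw [hρ₀sInf]; exact csInf_le hbdd hρsS
  have hIntΩ : Integrable (fun ω => Real.exp (‖U 0 ω‖ / ρs)) ℙ := by
    by_contra hcon
    have hmem : ∀ σ : ℝ, 0 < σ → σ ≤ ρs → σ ∈ S := by
      intro σ hσ hσle
      have hni : ¬ Integrable (fun ω => Real.exp (‖U 0 ω‖ / σ)) ℙ := by
        intro hI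
        apply hcon
        apply hI.mono' (Real.measurable_exp.comp
          ((hU 0).norm.div_const ρs)).aestronglyMeasurable
        filter_upwards with ω
        simp only [Function.comp_apply]
        rw [Real.norm_eq_abs, abs_of_pos (Real.exp_pos _)]
        apply Real.exp_le_exp.2
        gcongr
      refine ⟨hσ, ?_⟩
      rw [integral_undef hni]
      norm_num
    have hhalf : ρ₀ ≤ ρ₀/2 := by
      have hmem2 := hmem (min (ρ₀/2) ρs) (lt_min (by linarith) hρspos) (min_le_right _ _)
      have hle := csInf_le hbdd hmem2
      calc ρ₀ = sInf S := hρ₀sInf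
        _ ≤ min (ρ₀/2) ρs := hle
        _ ≤ ρ₀/2 := min_le_left _ _
    linarith
  set μ₀ : Measure B := ℙ.map (U 0) with hμ₀
  haveI : IsProbabilityMeasure μ₀ := Measure.isProbabilityMeasure_map (hU 0).aemeasurable
  have hmeasexp : Measurable (fun x : B => Real.exp (‖x‖ / ρs)) :=
    Real.measurable_exp.comp (measurable_norm.div_const ρs)
  have hIntμ : Integrable (fun x => Real.exp (‖x‖ / ρs)) μ₀ := by
    rw [hμ₀, integrable_map_measure hmeasexp.aestronglyMeasurable (hU 0).aemeasurable]
    exact hIntΩ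
  have h2μ : ∫ x, Real.exp (‖x‖ / ρs) ∂μ₀ ≤ 2 := by
    rw [hμ₀, integral_map (hU 0).aemeasurable hmeasexp.aestronglyMeasurable]
    exact h2Ω
  have hvec : Measurable (fun ω (i : Fin n) => U i ω) :=
    measurable_pi_lambda _ (fun i => hU i)
  have hlaw : ℙ.map (fun ω (i : Fin n) => U i ω) = Measure.pi (fun _ : Fin n => μ₀) :=
    vec_law hU hIndep hId n
  have hfc : Continuous (fun x : Fin n → B => ‖∑ i, x i‖) :=
    continuous_norm.comp (continuous_finset_sum _ fun i _ => continuous_apply i)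
  have hsum : ∀ ω, ∑ i ∈ Finset.range n, U i ω = ∑ i : Fin n, U i ω := fun ω =>
    (Fin.sum_univ_eq_sum_range (fun k => U k ω) n).symm
  have hint_eq : ∫ ω', ‖∑ i ∈ Finset.range n, U i ω'‖ ∂ℙ
      = ∫ x, ‖∑ i, x i‖ ∂(Measure.pi (fun _ : Fin n => μ₀)) := by
    rw [← hlaw, integral_map hvec.aemeasurable hfc.aestronglyMeasurable]
    apply integral_congr_ae
    filter_upwards with ω
    rw [hsum ω]
  set c0 : ℝ := ∫ x, ‖∑ i, x i‖ ∂(Measure.pi (fun _ : Fin n => μ₀)) with hc0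
  have hcmeas : MeasurableSet {x : Fin n → B | t ≤ |‖∑ i, x i‖ - c0|} :=
    measurableSet_le measurable_const ((hfc.measurable.sub measurable_const).abs)
  have hseteq : {ω | t ≤ |‖∑ i ∈ Finset.range n, U i ω‖ -
      ∫ ω', ‖∑ i ∈ Finset.range n, U i ω'‖ ∂ℙ|}
      = (fun ω (i : Fin n) => U i ω) ⁻¹' {x : Fin n → B | t ≤ |‖∑ i, x i‖ - c0|} := by
    ext ω
    simp only [Set.mem_setOf_eq, Set.mem_preimage]
    rw [hint_eq, hsum ω]
  rw [hseteq, ← Measure.map_apply hvec hcmeas, hlaw]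
  have hmain := pi_tail (μ := μ₀) hρspos hIntμ h2μ hn ht
  have hn0 : (0:ℝ) < n := by exact_mod_cast hn
  have harith : 2 * Real.exp (-(1/384) * min (t^2/(n*ρs^2)) (t/ρs))
      ≤ 2 * Real.exp (-(1/1536) * min (t ^ 2 / (n * ρ₀ ^ 2)) (t / ρ₀)) := by
    have e1 : t^2/(n*ρ₀^2) ≤ 4*(t^2/(n*ρs^2)) := by
      rw [show (4:ℝ)*(t^2/(n*ρs^2)) = (4*t^2)/(n*ρs^2) by ring,
        div_le_div_iff₀ (by positivity) (by positivity)]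
      have hsq : ρs^2 ≤ 4*ρ₀^2 := by nlinarith
      nlinarith [mul_le_mul_of_nonneg_left hsq (by positivity : (0:ℝ) ≤ t^2 * n)]
    have e2 : t/ρ₀ ≤ 4*(t/ρs) := by
      rw [show (4:ℝ)*(t/ρs) = (4*t)/ρs by ring,
        div_le_div_iff₀ (by positivity) (by positivity)]
      nlinarith
    have hmin : min (t ^ 2 / (n * ρ₀ ^ 2)) (t / ρ₀) ≤ 4 * min (t^2/(n*ρs^2)) (t/ρs) := by
      rcases le_total (t^2/(n*ρs^2)) (t/ρs) with h | h
      · rw [min_eq_left h]; exact (min_le_left _ _).trans e1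
      · rw [min_eq_right h]; exact (min_le_right _ _).trans e2
    have hexp : -(1/384) * min (t^2/(n*ρs^2)) (t/ρs)
        ≤ -(1/1536) * min (t ^ 2 / (n * ρ₀ ^ 2)) (t / ρ₀) := by linarith
    have := Real.exp_le_exp.2 hexp
    linarith
  calc ((Measure.pi (fun _ : Fin n => μ₀)) {x : Fin n → B | t ≤ |‖∑ i, x i‖ - c0|}).toReal
      ≤ 2 * Real.exp (-(1/384) * min (t^2/(n*ρs^2)) (t/ρs)) := hmain
    _ ≤ 2 * Real.exp (-(1/1536) * min (t ^ 2 / (n * ρ₀ ^ 2)) (t / ρ₀)) := harith
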